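/- In the standard IV model with β_1 ≥ β_0 (where ζ_{yx.w} factorizes as α_x-type times β_w-type terms under W ⊥ Y | X), one has ζ_{11.1} = max{ζ_{11.1}, ζ_{11.0}, −ζ_{01.0}−ζ_{10.0}+ζ_{10.1}+ζ_{11.1}, ζ_{10.0}+ζ_{11.0}−ζ_{01.1}−ζ_{10.1}}, i.e., the Balke–Pearl lower bound on η_1 is attained by ζ_{11.1}. -/
import Mathlib


/-- Under `W ⊥ Y | X` with `β₁ ≥ β₀`, the Balke–Pearl lower bound on `η₁` is attained by
`ζ_{11.1}`: `ζ_{11.1} = max{ζ_{11.1}, ζ_{11.0}, -ζ_{01.0}-ζ_{10.0}+ζ_{10.1}+ζ_{11.1},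
ζ_{10.0}+ζ_{11.0}-ζ_{01.1}-ζ_{10.1}}`, where
`ζ_{yx.w} = α_x^{[y=1]}(1-α_x)^{[y=0]} β_w^{[x=1]}(1-β_w)^{[x=0]}`. -/
theorem stmt19 (a0 a1 b0 b1 : ℝ)
    (ha0 : a0 ∈ Set.Icc (0:ℝ) 1) (ha1 : a1 ∈ Set.Icc (0:ℝ) 1)
    (hb0 : b0 ∈ Set.Icc (0:ℝ) 1) (hb1 : b1 ∈ Set.Icc (0:ℝ) 1)
    (hb : b0 ≤ b1) :
    a1 * b1 =
      max (max (a1 * b1) (a1 * b0))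
          (max (-(1 - a1) * b0 - a0 * (1 - b0) + a0 * (1 - b1) + a1 * b1)
               (a0 * (1 - b0) + a1 * b0 - (1 - a1) * b1 - a0 * (1 - b1))) := by
  obtain ⟨ha0l, ha0r⟩ := ha0
  obtain ⟨ha1l, ha1r⟩ := ha1
  obtain ⟨hb0l, hb0r⟩ := hb0
  obtain ⟨hb1l, hb1r⟩ := hb1
  symm
  apply le_antisymm
  · apply max_le
    · apply max_le <;> nlinarith
    · apply max_le <;> nlinarith
  · exact le_max_of_le_left (le_max_left _ _)
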